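/- arXiv:1511.01270 — 4 statements merged into one kernel-verified Lean document; each statement's English description precedes it below -/
import Mathlib

section
/- Let E be a real normed vector space, let x_1, …, x_J ∈ E and let t_1 < t_2 < … < t_J be real numbers satisfying the sub-sonic condition (SS) with parameter ρ ≥ 0, and let r > 0. Then for any j, k ∈ {1, …, J} and any y in the closed ball of radius r around x_j, there exists a point x in the closed ball of radius r around x_k such that ‖x − y‖ ≤ ρ·|t_j − t_k|. (Normed-space version of Lemma 4.4 of the paper; the proof uses the straight segment from y towards x_k in place of the minimizing geodesic.) -/
open Metric

/-- Normed-space version of Lemma 4.4: under the sub-sonic condition, for any point `y`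
in the closed `r`-ball around `x j` there is a point `z` in the closed `r`-ball around
`x k` with `‖z - y‖ ≤ ρ |t j - t k|`. -/
theorem stmt_1 {E : Type*} [NormedAddCommGroup E] [NormedSpace ℝ E]
    (J : ℕ) (x : ℕ → E) (t : ℕ → ℝ)
    (ht : ∀ j, j + 1 < J → t j < t (j + 1))
    (ρ : ℝ) (hρ : 0 ≤ ρ)
    (hSS : ∀ j, j + 1 < J → ‖x (j + 1) - x j‖ ≤ ρ * (t (j + 1) - t j))
    (r : ℝ) (hr : 0 < r) :
    ∀ j k, j < J → k < J → ∀ y ∈ closedBall (x j) r,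
      ∃ z ∈ closedBall (x k) r, ‖z - y‖ ≤ ρ * |t j - t k| := by
  have tmono : ∀ j k, j ≤ k → k < J → t j ≤ t k := by
    intro j k hjk hkJ
    induction k with
    | zero => interval_cases j; simp
    | succ n ih =>
      rcases Nat.lt_or_ge j (n+1) with h | h
      · have hjn : j ≤ n := Nat.lt_succ_iff.mp h
        exact le_trans (ih hjn (Nat.lt_of_succ_lt hkJ)) (le_of_lt (ht n hkJ))
      · have : j = n + 1 := le_antisymm hjk h
        subst this; rfl
  have key : ∀ j k, j ≤ k → k < J → ‖x k - x j‖ ≤ ρ * (t k - t j) := by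
    intro j k hjk hkJ
    induction k with
    | zero =>
      interval_cases j
      simp
    | succ n ih =>
      rcases Nat.lt_or_ge j (n+1) with h | h
      · have hjn : j ≤ n := Nat.lt_succ_iff.mp h
        have hnJ : n < J := Nat.lt_of_succ_lt hkJ
        have h1 := ih hjn hnJ
        have h2 := hSS n hkJ
        calc ‖x (n+1) - x j‖ ≤ ‖x (n+1) - x n‖ + ‖x n - x j‖ := norm_sub_le_norm_sub_add_norm_sub _ _ _
          _ ≤ ρ * (t (n+1) - t n) + ρ * (t n - t j) := add_le_add h2 h1
          _ = ρ * (t (n+1) - t j) := by ring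
      · have : j = n + 1 := le_antisymm hjk h
        subst this
        simp
  intro j k hj hk y hy
  refine ⟨y + (x k - x j), ?_, ?_⟩
  · rw [mem_closedBall, dist_eq_norm] at hy ⊢
    have : y + (x k - x j) - x k = y - x j := by abel
    rw [this]; exact hy
  · have : y + (x k - x j) - y = x k - x j := by abel
    rw [this]
    rcases le_total j k with h | h
    · have := key j k h hk
      have habs : |t j - t k| = t k - t j := by
        rw [abs_sub_comm, abs_of_nonneg (sub_nonneg.mpr (tmono j k h hk))]
      rw [habs]; exact this
    · have h1 := key k j h hj
      have : x k - x j = -(x j - x k) := by abel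
      rw [this, norm_neg]
      have habs : |t j - t k| = t j - t k :=
        abs_of_nonneg (sub_nonneg.mpr (tmono k j h hj))
      rw [habs]; exact h1
end

section
/- Let E be a (nontrivial) real normed vector space, let Ω ⊆ E be open and bounded, let R > 0 satisfy closedBall(0, R) ⊆ Ω, and let ε ∈ (0, R]. Define Ω_ε = {x ∈ Ω : there exists y in the topological frontier of Ω with ‖x − y‖ ≤ infDist(y, closedBall(0, R)) + ε}. Then Ω_ε ∩ closedBall(0, R) = closedBall(0, R) ∖ ball(0, R − ε). In other words, inside the ball of radius R, the set Ω_ε is exactly the annulus of points at distance between R − ε and R from the origin. (Euclidean analogue of Lemma 4.7 of the paper, in which the minimizing geodesics of a simple manifold are replaced by straight rays from the origin.) -/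
open Metric Set

lemma seg_frontier {E : Type*} [NormedAddCommGroup E] [NormedSpace ℝ E]
    {Ω : Set E} (hΩo : IsOpen Ω) {a b : E} (ha : a ∈ Ω) (hb : b ∉ Ω) :
    ∃ y ∈ segment ℝ a b, y ∈ frontier Ω := by
  by_contra h
  push_neg at h
  have hpc : IsPreconnected (segment ℝ a b) := (convex_segment a b).isPreconnected
  have := hpc Ω (closure Ω)ᶜ hΩo (isClosed_closure.isOpen_compl)
    (fun s hs => by
      have hsfr := h s hs
      rw [frontier, hΩo.interior_eq] at hsfr
      by_cases hsΩ : s ∈ Ω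
      · exact Or.inl hsΩ
      · exact Or.inr fun hsc => hsfr ⟨hsc, hsΩ⟩)
    ⟨a, left_mem_segment ℝ a b, ha⟩
    ⟨b, right_mem_segment ℝ a b, fun hbc => by
      have hbfr := h b (right_mem_segment ℝ a b)
      rw [frontier, hΩo.interior_eq] at hbfr
      exact hbfr ⟨hbc, hb⟩⟩
  obtain ⟨z, _, hz1, hz2⟩ := this
  exact hz2 (subset_closure hz1)

/-- Euclidean analogue of Lemma 4.7: inside the ball of radius `R`, the region
`Ω_ε` reachable by unique continuation from the boundary data is exactly the
annulus `closedBall 0 R \ ball 0 (R - ε)`. -/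
theorem stmt_5 {E : Type*} [NormedAddCommGroup E] [NormedSpace ℝ E] [Nontrivial E]
    (Ω : Set E) (hΩo : IsOpen Ω) (hΩb : Bornology.IsBounded Ω)
    (R : ℝ) (hR : 0 < R) (hRΩ : closedBall (0 : E) R ⊆ Ω)
    (ε : ℝ) (hε0 : 0 < ε) (hεR : ε ≤ R) :
    {p : E | p ∈ Ω ∧ ∃ y ∈ frontier Ω,
        ‖p - y‖ ≤ infDist y (closedBall (0 : E) R) + ε} ∩ closedBall (0 : E) R
      = closedBall (0 : E) R \ ball (0 : E) (R - ε) := by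
  have hfrΩ : ∀ y ∈ frontier Ω, y ∉ Ω := by
    intro y hy hyΩ
    rw [frontier, hΩo.interior_eq] at hy
    exact hy.2 hyΩ
  ext x
  simp only [mem_inter_iff, mem_setOf_eq, mem_diff, mem_closedBall, mem_ball,
    dist_zero_right, not_lt]
  constructor
  · rintro ⟨⟨hxΩ, y, hyfr, hxy⟩, hxR⟩
    refine ⟨hxR, ?_⟩
    have hyR : R < ‖y‖ := by
      by_contra h
      push_neg at h
      exact hfrΩ y hyfr (hRΩ (by simpa [mem_closedBall, dist_zero_right] using h))
    -- infDist y (closedBall 0 R) ≤ ‖y‖ - R, witnessed by (R/‖y‖) • y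
    have hy0 : y ≠ 0 := fun h => by simp [h] at hyR; linarith
    have hle : infDist y (closedBall (0 : E) R) ≤ ‖y‖ - R := by
      have hmem : (R / ‖y‖) • y ∈ closedBall (0 : E) R := by
        simp only [mem_closedBall, dist_zero_right, norm_smul, Real.norm_eq_abs]
        rw [abs_of_nonneg (div_nonneg hR.le (norm_nonneg y))]
        rw [div_mul_cancel₀ _ (norm_ne_zero_iff.2 hy0)]
      calc infDist y (closedBall (0 : E) R) ≤ dist y ((R / ‖y‖) • y) :=
            infDist_le_dist_of_mem hmem
        _ = ‖y‖ - R := by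
            rw [dist_eq_norm]
            nth_rewrite 1 [← one_smul ℝ y]
            rw [← sub_smul, norm_smul, Real.norm_eq_abs]
            rw [abs_of_nonneg (by
              have : R / ‖y‖ ≤ 1 := (div_le_one (norm_pos_iff.2 hy0)).2 hyR.le
              linarith)]
            rw [sub_mul, one_mul, div_mul_cancel₀ _ (norm_ne_zero_iff.2 hy0)]
    have h1 : ‖y‖ - ‖x‖ ≤ ‖x - y‖ := by
      calc ‖y‖ - ‖x‖ ≤ ‖y - x‖ := norm_sub_norm_le y x
        _ = ‖x - y‖ := norm_sub_rev y x
    linarith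
  · rintro ⟨hxR, hxlo⟩
    have hxΩ : x ∈ Ω := hRΩ (by simpa [mem_closedBall, dist_zero_right] using hxR)
    refine ⟨⟨hxΩ, ?_⟩, hxR⟩
    -- pick unit vector u with x = ‖x‖ • u
    obtain ⟨u, hu, hxu⟩ : ∃ u : E, ‖u‖ = 1 ∧ x = ‖x‖ • u := by
      by_cases hx : x = 0
      · obtain ⟨u, hu⟩ := exists_norm_eq E zero_le_one
        exact ⟨u, hu, by simp [hx]⟩
      · exact ⟨‖x‖⁻¹ • x, by
          simp [norm_smul, abs_of_nonneg, inv_mul_cancel₀ (norm_ne_zero_iff.2 hx)], by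
          rw [smul_smul, mul_inv_cancel₀ (norm_ne_zero_iff.2 hx), one_smul]⟩
    obtain ⟨M, hM⟩ := hΩb.subset_closedBall 0
    set T : ℝ := max (M + 1) ‖x‖ with hT
    have hTx : ‖x‖ ≤ T := le_max_right _ _
    have hTM : M < T := lt_of_lt_of_le (lt_add_one M) (le_max_left _ _)
    have hT0 : 0 ≤ T := le_trans (norm_nonneg x) hTx
    have hb : (T • u) ∉ Ω := by
      intro h
      have := hM h
      simp only [mem_closedBall, dist_zero_right, norm_smul, Real.norm_eq_abs, hu,
        mul_one, abs_of_nonneg hT0] at this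
      linarith
    obtain ⟨y, hyseg, hyfr⟩ := seg_frontier hΩo hxΩ hb
    refine ⟨y, hyfr, ?_⟩
    obtain ⟨a, b, ha, hb', hab, hy⟩ := hyseg
    have hyu : y = (a * ‖x‖ + b * T) • u := by
      rw [← hy]
      nth_rewrite 1 [hxu]
      rw [smul_smul, smul_smul, ← add_smul]
    set t : ℝ := a * ‖x‖ + b * T with ht
    have htx : ‖x‖ ≤ t := by nlinarith
    have ht0 : 0 ≤ t := le_trans (norm_nonneg x) htx
    have hyn : ‖y‖ = t := by rw [hyu, norm_smul, Real.norm_eq_abs, hu, mul_one, abs_of_nonneg ht0]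
    have hxy : ‖x - y‖ = t - ‖x‖ := by
      rw [hyu]
      nth_rewrite 1 [hxu]
      rw [← sub_smul, norm_smul, Real.norm_eq_abs, hu, mul_one, abs_of_nonpos (by linarith)]
      ring
    -- infDist y (closedBall 0 R) ≥ ‖y‖ - R
    have hge : ‖y‖ - R ≤ infDist y (closedBall (0 : E) R) := by
      by_contra h
      push_neg at h
      obtain ⟨z, hz, hzd⟩ := (infDist_lt_iff ⟨0, by simp [hR.le]⟩).1 h
      simp only [mem_closedBall, dist_zero_right] at hz
      have := norm_sub_norm_le y z
      rw [← dist_eq_norm] at this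
      linarith
    rw [hxy]
    linarith
end

section
/- Let E be a real inner product space, let S, T ⊆ E, let t_j < t_k be real numbers and ρ ∈ [0, 1), and assume that every point of T lies within distance ρ·(t_k − t_j) of S, i.e. infDist(y, S) ≤ ρ·(t_k − t_j) for all y ∈ T. Let x ∈ S and let ν be a unit vector with ⟨z − x, ν⟩ ≤ 0 for all z ∈ S (an outward normal to S at x). Then for every t ≥ t_k the point x + (t − t_j)·ν does not belong to T. (Euclidean content of Example 6.3 of the paper: for convex sources the outgoing normal ray emitted from S_j at time t_j does not meet the later source S_k at any time t ≥ t_k, so the sub-sonic condition prevents outgoing wavefronts of convex sources from intersecting later sources.) -/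
open Metric

/-- Euclidean content of Example 6.3: if every point of `T` is within distance
`ρ (t_k - t_j)` of `S`, and `ν` is a unit outward normal to `S` at `x ∈ S`, then for
every `t ≥ t_k` the point `x + (t - t_j) • ν` on the outgoing normal ray does not
belong to `T`. -/
theorem stmt_7 {E : Type*} [NormedAddCommGroup E] [InnerProductSpace ℝ E]
    (S T : Set E) (tj tk : ℝ) (htjk : tj < tk)
    (ρ : ℝ) (hρ0 : 0 ≤ ρ) (hρ1 : ρ < 1)
    (hsub : ∀ y ∈ T, infDist y S ≤ ρ * (tk - tj))
    (x : E) (hx : x ∈ S)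
    (ν : E) (hν : ‖ν‖ = 1) (hnormal : ∀ z ∈ S, (inner ℝ (z - x) ν : ℝ) ≤ 0) :
    ∀ t : ℝ, tk ≤ t → x + (t - tj) • ν ∉ T := by
  intro t ht hyT
  set y := x + (t - tj) • ν with hy
  have hkey : t - tj ≤ infDist y S := by
    by_contra h
    rw [not_le] at h
    obtain ⟨z, hz, hdz⟩ := (infDist_lt_iff ⟨x, hx⟩).1 h
    have h1 : (inner ℝ (y - z) ν : ℝ) ≤ ‖y - z‖ := by
      calc (inner ℝ (y - z) ν : ℝ) ≤ ‖y - z‖ * ‖ν‖ := real_inner_le_norm _ _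
        _ = ‖y - z‖ := by rw [hν, mul_one]
    have h2 : (inner ℝ (y - z) ν : ℝ) = (t - tj) - inner ℝ (z - x) ν := by
      have : y - z = (t - tj) • ν - (z - x) := by
        simp [hy]; abel
      rw [this, inner_sub_left, real_inner_smul_left, real_inner_self_eq_norm_sq, hν]
      ring
    have := hnormal z hz
    rw [dist_eq_norm] at hdz
    linarith
  have hlt : ρ * (tk - tj) < t - tj := by nlinarith
  have := hsub y hyT
  linarith
end

section
/- Let X be a metric space, let S ⊆ X be nonempty, let c ∈ X and R > 0 with S ⊆ closedBall(c, R), and suppose there exist two points a, b ∈ S with d(a, b) = 2R. Then c is a minimizer of the function ϱ_S(x) = sup_{y ∈ S} d(x, y): for every x ∈ X one has sup_{y ∈ S} d(c, y) ≤ sup_{y ∈ S} d(x, y), and in fact sup_{y ∈ S} d(x, y) ≥ R ≥ sup_{y ∈ S} d(c, y). (Metric content of the Lemma in Section 5 of the paper, which shows that under condition (R2) the circumcenter of the support S_j recovers the translation point x_j.) -/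
open Metric

/-- Metric content of the Lemma of Section 5: if `S ⊆ closedBall c R` contains two
points at distance `2R`, then `c` minimizes the circumradius function
`x ↦ ⨆ y : S, dist x y`, and indeed `⨆ y : S, dist x y ≥ R ≥ ⨆ y : S, dist c y`
for every `x`. -/
theorem stmt_8 {X : Type*} [MetricSpace X] (S : Set X) (hS : S.Nonempty)
    (c : X) (R : ℝ) (hR : 0 < R) (hsub : S ⊆ closedBall c R)
    (a b : X) (ha : a ∈ S) (hb : b ∈ S) (hab : dist a b = 2 * R) :
    ∀ x : X, (⨆ y : S, dist c (y : X)) ≤ (⨆ y : S, dist x (y : X)) ∧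
      R ≤ (⨆ y : S, dist x (y : X)) ∧ (⨆ y : S, dist c (y : X)) ≤ R := by
  intro x
  have hne : Nonempty S := hS.to_subtype
  have hbdd : ∀ z : X, BddAbove (Set.range fun y : S => dist z (y : X)) := by
    intro z
    refine ⟨dist z c + R, ?_⟩
    rintro r ⟨y, rfl⟩
    have := (mem_closedBall.mp (hsub y.2))
    calc dist z (y : X) ≤ dist z c + dist c (y : X) := dist_triangle _ _ _
      _ ≤ dist z c + R := by linarith [dist_comm c (y : X) ▸ this]
  have hcR : (⨆ y : S, dist c (y : X)) ≤ R := by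
    refine ciSup_le fun y => ?_
    have := mem_closedBall.mp (hsub y.2)
    rw [dist_comm]; exact this
  have hRx : R ≤ ⨆ y : S, dist x (y : X) := by
    have h1 : dist x a ≤ ⨆ y : S, dist x (y : X) := le_ciSup (hbdd x) ⟨a, ha⟩
    have h2 : dist x b ≤ ⨆ y : S, dist x (y : X) := le_ciSup (hbdd x) ⟨b, hb⟩
    have h3 : dist a b ≤ dist x a + dist x b := by
      rw [dist_comm x a]; exact dist_triangle _ _ _
    linarith
  exact ⟨hcR.trans hRx, hRx, hcR⟩
end
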